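/- Atomic forcing is local: (a) if (Jᵢ)ᵢ is a family of open subsets of ℝ and Jᵢ ⊩ σ = τ for every i, then (⋃ᵢ Jᵢ) ⊩ σ = τ, and similarly for ∈; (b) for open J ⊆ ℝ, J ⊩ σ = τ if and only if for every r ∈ J there is an open J' containing r with (J ∩ J') ⊩ σ = τ, and similarly for ∈. -/

import Mathlib

/-- Names over ℝ: a name is a family of pairs of a name and an open set of reals. -/
inductive Name : Type 1
  | mk (ι : Type) (elem : ι → Name) (cond : ι → Set ℝ) (hopen : ∀ i, IsOpen (cond i)) : Name

namespace Name

/-- The index type of the family of pairs of a name. -/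
def idx : Name → Type
  | mk ι _ _ _ => ι

/-- The name component of the `i`-th pair. -/
def elem : (σ : Name) → σ.idx → Name
  | mk _ e _ _ => e

/-- The open-set component of the `i`-th pair. -/
def cond : (σ : Name) → σ.idx → Set ℝ
  | mk _ _ c _ => c

theorem cond_isOpen : ∀ (σ : Name) (i : σ.idx), IsOpen (σ.cond i)
  | mk _ _ _ h => h

/-- Rank of a name, used for the recursive definition of forcing. -/
noncomputable def rank : Name → Ordinal.{0}
  | mk _ e _ _ => Ordinal.lsub fun i => rank (e i)

theorem rank_elem_lt : ∀ (σ : Name) (i : σ.idx), (σ.elem i).rank < σ.rank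
  | mk ι e c h, i => by
    simpa [rank, elem] using Ordinal.lt_lsub (fun i => rank (e i)) i

theorem measure_lt_left {a a' b : Ordinal.{0}} (h : a' < a) :
    Prod.Lex (· < ·) (· < ·) (max a' b, min a' b) (max a b, min a b) := by
  rcases le_or_gt a b with hab | hab
  · have h1 : max a' b = max a b := by
      rw [max_eq_right hab, max_eq_right (h.le.trans hab)]
    rw [h1]
    exact Prod.Lex.right _ (by rw [min_eq_left hab, min_eq_left (h.le.trans hab)]; exact h)
  · exact Prod.Lex.left _ _ (by rw [max_eq_left hab.le]; exact max_lt h hab)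

mutual
  /-- `feq σ τ J` means `J ⊩ σ = τ`. -/
  def feq (σ τ : Name) (J : Set ℝ) : Prop :=
    (∀ i : σ.idx, fmem (σ.elem i) τ (J ∩ σ.cond i)) ∧
    (∀ j : τ.idx, fmem (τ.elem j) σ (J ∩ τ.cond j))
  termination_by (max σ.rank τ.rank, min σ.rank τ.rank)
  decreasing_by
    · exact measure_lt_left (rank_elem_lt σ i)
    · rw [max_comm σ.rank, min_comm σ.rank]
      exact measure_lt_left (rank_elem_lt τ j)

  /-- `fmem σ τ J` means `J ⊩ σ ∈ τ`. -/
  def fmem (σ τ : Name) (J : Set ℝ) : Prop :=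
    ∀ r ∈ J, ∃ (j : τ.idx) (J' : Set ℝ), IsOpen J' ∧ r ∈ J' ∩ τ.cond j ∧
      feq σ (τ.elem j) (J' ∩ τ.cond j)
  termination_by (max σ.rank τ.rank, min σ.rank τ.rank)
  decreasing_by
    rw [max_comm σ.rank, min_comm σ.rank, max_comm σ.rank, min_comm σ.rank]
    exact measure_lt_left (rank_elem_lt τ j)
end

end Name

theorem forces_local :
    (∀ (ι' : Type) (Js : ι' → Set ℝ), (∀ i, IsOpen (Js i)) → ∀ σ τ : Name,
      ((∀ i, Name.feq σ τ (Js i)) → Name.feq σ τ (⋃ i, Js i)) ∧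
      ((∀ i, Name.fmem σ τ (Js i)) → Name.fmem σ τ (⋃ i, Js i))) ∧
    (∀ (J : Set ℝ), IsOpen J → ∀ σ τ : Name,
      (Name.feq σ τ J ↔ ∀ r ∈ J, ∃ J' : Set ℝ, IsOpen J' ∧ r ∈ J' ∧ Name.feq σ τ (J ∩ J')) ∧
      (Name.fmem σ τ J ↔ ∀ r ∈ J, ∃ J' : Set ℝ, IsOpen J' ∧ r ∈ J' ∧ Name.fmem σ τ (J ∩ J'))) := by
  have hmem : ∀ (σ τ : Name) (J : Set ℝ), Name.fmem σ τ J ↔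
      ∀ r ∈ J, ∃ (j : τ.idx) (J' : Set ℝ), IsOpen J' ∧ r ∈ J' ∩ τ.cond j ∧
        Name.feq σ (τ.elem j) (J' ∩ τ.cond j) := by
    intro σ τ J; rw [Name.fmem]
  have heq : ∀ (σ τ : Name) (J : Set ℝ), Name.feq σ τ J ↔
      (∀ i : σ.idx, Name.fmem (σ.elem i) τ (J ∩ σ.cond i)) ∧
      (∀ j : τ.idx, Name.fmem (τ.elem j) σ (J ∩ τ.cond j)) := by
    intro σ τ J; rw [Name.feq]
  -- fmem union-locality
  have memU : ∀ (ι' : Type) (Js : ι' → Set ℝ) (σ τ : Name),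
      (∀ i, Name.fmem σ τ (Js i)) → Name.fmem σ τ (⋃ i, Js i) := by
    intro ι' Js σ τ h
    rw [hmem]
    intro r hr
    obtain ⟨i, hi⟩ := Set.mem_iUnion.mp hr
    exact (hmem σ τ (Js i)).mp (h i) r hi
  -- feq union-locality
  have eqU : ∀ (ι' : Type) (Js : ι' → Set ℝ) (σ τ : Name),
      (∀ i, Name.feq σ τ (Js i)) → Name.feq σ τ (⋃ i, Js i) := by
    intro ι' Js σ τ h
    rw [heq]
    constructor
    · intro i
      have : (⋃ k, Js k) ∩ σ.cond i = ⋃ k, (Js k ∩ σ.cond i) := by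
        rw [Set.iUnion_inter]
      rw [this]
      exact memU ι' _ _ _ fun k => ((heq σ τ (Js k)).mp (h k)).1 i
    · intro j
      have : (⋃ k, Js k) ∩ τ.cond j = ⋃ k, (Js k ∩ τ.cond j) := by
        rw [Set.iUnion_inter]
      rw [this]
      exact memU ι' _ _ _ fun k => ((heq σ τ (Js k)).mp (h k)).2 j
  constructor
  · intro ι' Js _ σ τ
    exact ⟨eqU ι' Js σ τ, memU ι' Js σ τ⟩
  · intro J hJ σ τ
    constructor
    · constructor
      · intro h r hr
        exact ⟨J, hJ, hr, by rwa [Set.inter_self]⟩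
      · intro h
        choose J' hJ'open hrJ' hfeq using h
        have hcov : J = ⋃ r : J, (J ∩ J' r r.2) := by
          apply Set.eq_of_subset_of_subset
          · intro x hx
            exact Set.mem_iUnion.mpr ⟨⟨x, hx⟩, hx, hrJ' x hx⟩
          · intro x hx
            obtain ⟨r, hr, _⟩ := Set.mem_iUnion.mp hx
            exact hr
        rw [hcov]
        exact eqU _ _ _ _ fun r => hfeq r r.2
    · constructor
      · intro h r hr
        exact ⟨J, hJ, hr, by rwa [Set.inter_self]⟩
      · intro h
        rw [hmem]
        intro r hr
        obtain ⟨J', _, hrJ', hf⟩ := h r hr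
        exact (hmem σ τ (J ∩ J')).mp hf r ⟨hr, hrJ'⟩
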